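/- With R(u,s) = √(u³/3 + u² + s), ρ(s) = 5/(3s(3s+4)), P(u,s) = (2/15)[u(2−u)(3+u)² + 6s(1+u)], and Q(u,s) = ρ(s)·P(u,s)/R(u,s), the identity ∂Q/∂u = 1/R(u,s)³ − ρ(s)·R(u,s) holds wherever R(u,s) ≠ 0 and s ∉ {0, −4/3}. -/

import Mathlib

/-- With `R` a local analytic branch of `√(u³/3+u²+s)`, `ρ(s) = 5/(3s(3s+4))`,
`P(u,s) = (2/15)[u(2−u)(3+u)² + 6s(1+u)]` and `Q = ρ P / R`, one has
`∂Q/∂u = 1/R³ − ρ R`. -/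
theorem dQ_du_identity (u s : ℂ) (hs : s * (3 * s + 4) ≠ 0)
    (R : ℂ → ℂ)
    (hRsq : ∀ᶠ v in nhds u, (R v) ^ 2 = v ^ 3 / 3 + v ^ 2 + s)
    (hRd : DifferentiableAt ℂ R u) (hRne : R u ≠ 0) :
    deriv (fun v => (5 / (3 * s * (3 * s + 4)))
        * ((2 / 15) * (v * (2 - v) * (3 + v) ^ 2 + 6 * s * (1 + v))) / R v) u
      = 1 / (R u) ^ 3 - (5 / (3 * s * (3 * s + 4))) * R u := by
  have hsq : (R u) ^ 2 = u ^ 3 / 3 + u ^ 2 + s := hRsq.self_of_nhds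
  have hderivsq : deriv (fun v => (R v) ^ 2) u
      = deriv (fun v => v ^ 3 / 3 + v ^ 2 + s) u :=
    Filter.EventuallyEq.deriv_eq hRsq
  have h1 : deriv (fun v => (R v) ^ 2) u = 2 * R u * deriv R u := by
    rw [deriv_fun_pow hRd]; ring
  have h2 : deriv (fun v => v ^ 3 / 3 + v ^ 2 + s) u = u ^ 2 + 2 * u := by
    have hd : HasDerivAt (fun v : ℂ => v ^ 3 / 3 + v ^ 2 + s) (u ^ 2 + 2 * u) u := by
      have h := (((hasDerivAt_pow 3 u).div_const 3).add (hasDerivAt_pow 2 u)).add_const s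
      refine h.congr_deriv ?_
      push_cast
      ring
    exact hd.deriv
  have hR' : deriv R u = (u ^ 2 + 2 * u) / (2 * R u) := by
    have h : 2 * R u * deriv R u = u ^ 2 + 2 * u := by
      rw [← h1, hderivsq, h2]
    field_simp
    linear_combination h
  set c : ℂ := 5 / (3 * s * (3 * s + 4)) with hc
  have hPd : DifferentiableAt ℂ
      (fun v => c * ((2 / 15) * (v * (2 - v) * (3 + v) ^ 2 + 6 * s * (1 + v)))) u := by
    fun_prop
  have hderiv : deriv (fun v => c * ((2 / 15) * (v * (2 - v) * (3 + v) ^ 2 + 6 * s * (1 + v))) / R v) u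
      = (deriv (fun v => c * ((2 / 15) * (v * (2 - v) * (3 + v) ^ 2 + 6 * s * (1 + v)))) u * R u
        - c * ((2 / 15) * (u * (2 - u) * (3 + u) ^ 2 + 6 * s * (1 + u))) * deriv R u) / (R u) ^ 2 :=
    deriv_div hPd hRd hRne
  have hP' : deriv (fun v => c * ((2 / 15) * (v * (2 - v) * (3 + v) ^ 2 + 6 * s * (1 + v)))) u
      = c * ((2 / 15) * ((2 - u) * (3 + u) ^ 2 - u * (3 + u) ^ 2 + u * (2 - u) * (2 * (3 + u)) + 6 * s)) := by
    have hd : HasDerivAt (fun v => c * ((2 / 15) * (v * (2 - v) * (3 + v) ^ 2 + 6 * s * (1 + v))))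
        (c * ((2 / 15) * ((2 - u) * (3 + u) ^ 2 - u * (3 + u) ^ 2 + u * (2 - u) * (2 * (3 + u)) + 6 * s))) u := by
      have h := ((((hasDerivAt_id u).mul ((hasDerivAt_id u).const_sub 2)).mul
        (((hasDerivAt_id u).const_add 3).pow 2)).add
        (((hasDerivAt_id u).const_add 1).const_mul (6 * s))).const_mul (2 / 15)
      have h2 := h.const_mul c
      refine h2.congr_deriv ?_
      simp only [id, Pi.pow_apply, Pi.mul_apply]
      ring
    exact hd.deriv
  rw [hderiv, hP', hR']
  have hs3 : (3 : ℂ) * s * (3 * s + 4) ≠ 0 := by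
    intro h
    apply hs
    rcases mul_eq_zero.mp h with h | h
    · rcases mul_eq_zero.mp h with h | h
      · norm_num at h
      · simp [h]
    · simp [h]
  set r := R u with hr
  set A : ℂ := c * ((2 / 15) * ((2 - u) * (3 + u) ^ 2 - u * (3 + u) ^ 2 + u * (2 - u) * (2 * (3 + u)) + 6 * s)) with hA
  set B : ℂ := c * ((2 / 15) * (u * (2 - u) * (3 + u) ^ 2 + 6 * s * (1 + u))) with hB
  have key : 2 * A * r ^ 2 - B * (u ^ 2 + 2 * u) = 2 - 2 * c * (r ^ 2) ^ 2 := by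
    rw [hsq, hA, hB, hc]
    have ha : s ≠ 0 := left_ne_zero_of_mul hs
    have hb : 3 * s + 4 ≠ 0 := right_ne_zero_of_mul hs
    field_simp
    ring
  calc (A * r - B * ((u ^ 2 + 2 * u) / (2 * r))) / r ^ 2
      = (2 * A * r ^ 2 - B * (u ^ 2 + 2 * u)) / (2 * r ^ 3) := by
        field_simp
    _ = (2 - 2 * c * (r ^ 2) ^ 2) / (2 * r ^ 3) := by rw [key]
    _ = 1 / r ^ 3 - c * r := by
        field_simp
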